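/- Let h, H, Q, x be positive integers with h ≤ H < Q, Q ≪ x and H = o(x) as x → ∞. Let f : ℕ → ℂ be essentially bounded and g a sieve function of range Q with Eratosthenes transform g'. Then ∑_{1 ≤ a ≤ H} ∑_{x < n ≤ x+h} f(n)g(n−a) = (∑_{1 ≤ a ≤ H} g(x−a))·(∑_{x < n ≤ x+h} f(n)) + (H ∑_{q ≤ h} g'(q)/q)·∑_{x < n ≤ x+h} f(n) + ∑_{1 ≤ a ≤ H} ∑_{h < q ≤ H} g'(q) ∑_{x < n ≤ x+h, n ≡ a mod q} f(n) − (∑_{1 ≤ a ≤ H} ∑_{q ≤ H, q | x−a} g'(q))·∑_{x < n ≤ x+h} f(n) + O_ε(x^ε h²). -/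

import Mathlib

open Finset Filter Asymptotics

/-- number of `a ∈ [1,H]` with `q ∣ m - a` -/
def cntAux (H q m : ℕ) : ℕ := #((Finset.Icc 1 H).filter (fun a => q ∣ m - a))

lemma count_mod (H q r : ℕ) (hq : 0 < q) (hr : r < q) :
    #((Finset.Icc 1 H).filter (fun a => a % q = r)) = (H + (q - r)) / q - (q - r) / q := by
  have h1 : #((Finset.Ioc (q - r) (H + (q - r))).filter (fun b => q ∣ b))
      = (H + (q - r)) / q - (q - r) / q := by
    have e : Finset.Ioc 0 (H + (q - r)) = Finset.Ioc 0 (q - r) ∪ Finset.Ioc (q - r) (H + (q - r)) :=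
      (Finset.Ioc_union_Ioc_eq_Ioc (Nat.zero_le _) (Nat.le_add_left _ _)).symm
    have hd : Disjoint ((Finset.Ioc 0 (q - r)).filter (fun b => q ∣ b))
        ((Finset.Ioc (q - r) (H + (q - r))).filter (fun b => q ∣ b)) := by
      apply Finset.disjoint_filter_filter
      rw [Finset.disjoint_left]
      intro b hb hb'
      simp only [Finset.mem_Ioc] at hb hb'
      omega
    have h2 := Nat.Ioc_filter_dvd_card_eq_div (H + (q - r)) q
    rw [e, Finset.filter_union, Finset.card_union_of_disjoint hd,
      Nat.Ioc_filter_dvd_card_eq_div] at h2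
    omega
  rw [← h1]
  apply Finset.card_bij (fun a _ => a + (q - r))
  · intro a ha
    simp only [Finset.mem_filter, Finset.mem_Icc] at ha
    simp only [Finset.mem_filter, Finset.mem_Ioc]
    obtain ⟨⟨ha1, ha2⟩, har⟩ := ha
    refine ⟨⟨by omega, by omega⟩, ?_⟩
    have hdm := Nat.div_add_mod a q
    refine ⟨a / q + 1, ?_⟩
    rw [Nat.mul_succ]
    omega
  · intro a₁ h₁ a₂ h₂ he
    omega
  · intro b hb
    simp only [Finset.mem_filter, Finset.mem_Ioc] at hb
    obtain ⟨⟨hb1, hb2⟩, k, rfl⟩ := hb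
    refine ⟨q * k - (q - r), ?_, by omega⟩
    simp only [Finset.mem_filter, Finset.mem_Icc]
    rcases k with _ | k
    · omega
    · have he : q * (k + 1) - (q - r) = r + q * k := by rw [Nat.mul_succ]; omega
      refine ⟨⟨by omega, by omega⟩, ?_⟩
      rw [he, Nat.add_mul_mod_self_left, Nat.mod_eq_of_lt hr]

lemma cnt_filter_eq (H q n : ℕ) (hn : H ≤ n) :
    (Finset.Icc 1 H).filter (fun a => q ∣ n - a)
      = (Finset.Icc 1 H).filter (fun a => a % q = n % q) := by
  apply Finset.filter_congr
  intro a ha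
  simp only [Finset.mem_Icc] at ha
  exact (Nat.modEq_iff_dvd' (by omega)).symm

lemma mod_count_eq_cntAux (H q n : ℕ) (hn : H ≤ n) :
    #((Finset.Icc 1 H).filter (fun a => n % q = a % q)) = cntAux H q n := by
  unfold cntAux
  rw [cnt_filter_eq H q n hn]
  exact congrArg Finset.card (Finset.filter_congr fun a _ => eq_comm)

lemma cnt_near (H q n : ℕ) (hq : 0 < q) (hn : H ≤ n) :
    |((cntAux H q n : ℝ)) - (H : ℝ) / (q : ℝ)| ≤ 2 := by
  have hr : n % q < q := Nat.mod_lt _ hq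
  have hcnt : cntAux H q n = (H + (q - n % q)) / q - (q - n % q) / q := by
    unfold cntAux
    rw [cnt_filter_eq H q n hn, count_mod H q (n % q) hq hr]
  set r := n % q
  set N := (H + (q - r)) / q with hN
  set e := (q - r) / q with he
  have he1 : e ≤ 1 := by
    rw [he]
    calc (q - r) / q ≤ q / q := Nat.div_le_div_right (by omega)
      _ = 1 := Nat.div_self hq
  have heN : e ≤ N := Nat.div_le_div_right (by omega)
  have hdm := Nat.div_add_mod (H + (q - r)) q
  have hmm : (H + (q - r)) % q < q := Nat.mod_lt _ hq
  have hq0 : (0:ℝ) < (q:ℝ) := by exact_mod_cast hq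
  rw [hcnt, abs_le]
  have hcast : ((N - e : ℕ) : ℝ) = (N : ℝ) - (e : ℝ) := by
    rw [Nat.cast_sub heN]
  have hNq : (q : ℝ) * N + ((H + (q - r)) % q : ℕ) = (H : ℝ) + ((q - r : ℕ) : ℝ) := by
    exact_mod_cast congrArg (Nat.cast : ℕ → ℝ) hdm
  have hs1 : (1:ℝ) ≤ ((q - r : ℕ) : ℝ) := by exact_mod_cast Nat.one_le_iff_ne_zero.2 (by omega)
  have hs2 : ((q - r : ℕ) : ℝ) ≤ (q : ℝ) := by exact_mod_cast Nat.sub_le q r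
  have hmmR : (((H + (q - r)) % q : ℕ) : ℝ) < (q : ℝ) := by exact_mod_cast hmm
  have hmm0 : (0:ℝ) ≤ (((H + (q - r)) % q : ℕ) : ℝ) := by positivity
  have he1R : ((e : ℕ) : ℝ) ≤ 1 := by exact_mod_cast he1
  have he0R : (0:ℝ) ≤ ((e : ℕ) : ℝ) := by positivity
  have heq : ((e : ℕ) : ℝ) * q ≤ 1 * q := mul_le_mul_of_nonneg_right he1R hq0.le
  have heq0 : (0:ℝ) ≤ ((e : ℕ) : ℝ) * q := by positivity
  constructor
  · have key1 : (H : ℝ) ≤ (((N - e : ℕ) : ℝ) + 2) * q := by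
      rw [hcast]; nlinarith
    rw [neg_le, neg_sub]
    have := (div_le_iff₀ hq0).2 key1
    linarith
  · have key2 : ((N - e : ℕ) : ℝ) * q ≤ (H : ℝ) + 2 * q := by
      rw [hcast]; nlinarith
    have h3 : ((N - e : ℕ) : ℝ) ≤ ((H : ℝ) + 2 * q) / q := (le_div_iff₀ hq0).2 key2
    have h4 : ((H : ℝ) + 2 * q) / q = (H : ℝ) / q + 2 := by field_simp
    linarith

lemma cnt_le_one (H q m : ℕ) (hq : H < q) (hm : H < m) : cntAux H q m ≤ 1 := by
  apply Finset.card_le_one.2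
  intro a ha b hb
  simp only [Finset.mem_filter, Finset.mem_Icc] at ha hb
  obtain ⟨⟨ha1, ha2⟩, hda⟩ := ha
  obtain ⟨⟨hb1, hb2⟩, hdb⟩ := hb
  have d1 : q ∣ (m - a) - (m - b) := Nat.dvd_sub hda hdb
  have d2 : q ∣ (m - b) - (m - a) := Nat.dvd_sub hdb hda
  have e1 : (m - a) - (m - b) = b - a := by omega
  have e2 : (m - b) - (m - a) = a - b := by omega
  rw [e1] at d1; rw [e2] at d2
  have z1 : b - a = 0 := Nat.eq_zero_of_dvd_of_lt d1 (by omega)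
  have z2 : a - b = 0 := Nat.eq_zero_of_dvd_of_lt d2 (by omega)
  omega

lemma exists_dvd_of_cnt_ne (h H q x n : ℕ) (hh : 0 < h) (hhH : h ≤ H) (hHx : H < x)
    (hn1 : x < n) (hn2 : n ≤ x + h) (hq : H < q)
    (hne : cntAux H q n ≠ cntAux H q x) :
    ∃ m ∈ Finset.Icc (x - H) (x - H + (h - 1)) ∪ Finset.Icc x (x + (h - 1)), q ∣ m := by
  rcases Finset.eq_empty_or_nonempty ((Finset.Icc 1 H).filter (fun a => q ∣ n - a)) with hEn | hNn
  · rcases Finset.eq_empty_or_nonempty ((Finset.Icc 1 H).filter (fun a => q ∣ x - a)) with hEx | hNx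
    · exfalso; apply hne; unfold cntAux; rw [hEn, hEx]
    · obtain ⟨a, ha⟩ := hNx
      simp only [Finset.mem_filter, Finset.mem_Icc] at ha
      obtain ⟨⟨ha1, ha2⟩, hda⟩ := ha
      by_cases hcase : a + (n - x) ≤ H
      · exfalso
        have : a + (n - x) ∈ (Finset.Icc 1 H).filter (fun b => q ∣ n - b) := by
          simp only [Finset.mem_filter, Finset.mem_Icc]
          refine ⟨⟨by omega, hcase⟩, ?_⟩
          have : n - (a + (n - x)) = x - a := by omega
          rw [this]; exact hda
        rw [hEn] at this; exact absurd this (Finset.notMem_empty _)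
      · refine ⟨x - a, ?_, hda⟩
        apply Finset.mem_union_left
        simp only [Finset.mem_Icc]
        omega
  · rcases Finset.eq_empty_or_nonempty ((Finset.Icc 1 H).filter (fun a => q ∣ x - a)) with hEx | hNx
    · obtain ⟨a, ha⟩ := hNn
      simp only [Finset.mem_filter, Finset.mem_Icc] at ha
      obtain ⟨⟨ha1, ha2⟩, hda⟩ := ha
      by_cases hcase : n - x < a
      · exfalso
        have : a - (n - x) ∈ (Finset.Icc 1 H).filter (fun b => q ∣ x - b) := by
          simp only [Finset.mem_filter, Finset.mem_Icc]
          refine ⟨⟨by omega, by omega⟩, ?_⟩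
          have : x - (a - (n - x)) = n - a := by omega
          rw [this]; exact hda
        rw [hEx] at this; exact absurd this (Finset.notMem_empty _)
      · refine ⟨n - a, ?_, hda⟩
        apply Finset.mem_union_right
        simp only [Finset.mem_Icc]
        omega
    · exfalso
      apply hne
      have hle_n : cntAux H q n ≤ 1 := cnt_le_one H q n hq (by omega)
      have hle_x : cntAux H q x ≤ 1 := cnt_le_one H q x hq hHx
      have h1 : 1 ≤ cntAux H q n := Finset.card_pos.2 hNn
      have h2 : 1 ≤ cntAux H q x := Finset.card_pos.2 hNx
      omega

lemma swap_sum (H : ℕ) (g' : ℕ → ℂ) (Qs : Finset ℕ) (m : ℕ) :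
    ∑ a ∈ Finset.Icc 1 H, ∑ q ∈ Qs.filter (fun q => q ∣ m - a), g' q
      = ∑ q ∈ Qs, (cntAux H q m : ℂ) * g' q := by
  simp_rw [Finset.sum_filter]
  rw [Finset.sum_comm]
  refine Finset.sum_congr rfl fun q _ => ?_
  rw [← Finset.sum_filter, Finset.sum_const, nsmul_eq_mul]
  rfl

lemma T3_swap (h H x : ℕ) (f g' : ℕ → ℂ) (hHx : H < x) :
    ∑ a ∈ Finset.Icc 1 H, ∑ q ∈ Finset.Ioc h H,
        g' q * ∑ n ∈ (Finset.Ioc x (x + h)).filter (fun n => n % q = a % q), f n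
      = ∑ n ∈ Finset.Ioc x (x + h), f n * ∑ q ∈ Finset.Ioc h H, (cntAux H q n : ℂ) * g' q := by
  have step1 : ∀ q : ℕ, ∑ a ∈ Finset.Icc 1 H, ∑ n ∈ Finset.Ioc x (x + h),
      (if n % q = a % q then g' q * f n else 0)
      = ∑ n ∈ Finset.Ioc x (x + h), (cntAux H q n : ℂ) * (g' q * f n) := by
    intro q
    rw [Finset.sum_comm]
    refine Finset.sum_congr rfl fun n hn => ?_
    simp only [Finset.mem_Ioc] at hn
    rw [← Finset.sum_filter, Finset.sum_const, nsmul_eq_mul,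
      mod_count_eq_cntAux H q n (by omega)]
  simp_rw [Finset.sum_filter, Finset.mul_sum, mul_ite, mul_zero]
  calc ∑ a ∈ Finset.Icc 1 H, ∑ q ∈ Finset.Ioc h H, ∑ n ∈ Finset.Ioc x (x + h),
        (if n % q = a % q then g' q * f n else 0)
      = ∑ q ∈ Finset.Ioc h H, ∑ a ∈ Finset.Icc 1 H, ∑ n ∈ Finset.Ioc x (x + h),
        (if n % q = a % q then g' q * f n else 0) := Finset.sum_comm
    _ = ∑ q ∈ Finset.Ioc h H, ∑ n ∈ Finset.Ioc x (x + h),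
        (cntAux H q n : ℂ) * (g' q * f n) := Finset.sum_congr rfl fun q _ => step1 q
    _ = ∑ n ∈ Finset.Ioc x (x + h), ∑ q ∈ Finset.Ioc h H,
        (cntAux H q n : ℂ) * (g' q * f n) := Finset.sum_comm
    _ = ∑ n ∈ Finset.Ioc x (x + h), ∑ q ∈ Finset.Ioc h H,
        f n * ((cntAux H q n : ℂ) * g' q) := by
        refine Finset.sum_congr rfl fun n _ => Finset.sum_congr rfl fun q _ => by ring

lemma divisor_bound (δ : ℝ) (hδ : 0 < δ) :
    ∃ C : ℝ, 1 ≤ C ∧ ∀ n : ℕ, n ≠ 0 → ((n.divisors.card : ℕ) : ℝ) ≤ C * (n : ℝ) ^ δ := by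
  have h2δ : (1:ℝ) < (2:ℝ) ^ δ := by
    rw [show (1:ℝ) = (2:ℝ) ^ (0:ℝ) by simp]
    exact Real.rpow_lt_rpow_left_iff (by norm_num) |>.2 hδ
  set s : ℝ := (2:ℝ) ^ δ - 1 with hs
  have hs0 : 0 < s := by simp only [hs]; linarith
  set M : ℝ := max 1 (1 / s) with hM
  have hM1 : 1 ≤ M := le_max_left _ _
  have hMs : 1 ≤ M * s := by
    have h := mul_le_mul_of_nonneg_right (le_max_right 1 (1/s)) hs0.le
    rw [one_div_mul_cancel hs0.ne'] at h
    exact h.trans_eq rfl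
  have key1 : ∀ a : ℕ, ((a:ℝ) + 1) ≤ M * ((2:ℝ) ^ δ) ^ a := by
    intro a
    have bern : 1 + (a:ℝ) * s ≤ (1 + s) ^ a := one_add_mul_le_pow (by linarith) a
    have h1 : (1:ℝ) + s = (2:ℝ) ^ δ := by rw [hs]; ring
    have h2 : ((a:ℝ) + 1) ≤ M * (1 + (a:ℝ) * s) := by
      have ha0 : (0:ℝ) ≤ (a:ℝ) := Nat.cast_nonneg a
      nlinarith
    calc ((a:ℝ) + 1) ≤ M * (1 + (a:ℝ) * s) := h2
      _ ≤ M * (1 + s) ^ a := mul_le_mul_of_nonneg_left bern (by linarith)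
      _ = M * ((2:ℝ) ^ δ) ^ a := by rw [h1]
  set T : ℕ := ⌈(2:ℝ) ^ (1/δ)⌉₊ with hT
  refine ⟨M ^ (T + 1), one_le_pow₀ hM1, ?_⟩
  intro n hn
  set w : ℕ → ℝ := fun p => if (p:ℝ) ^ δ < 2 then M else 1 with hw
  have h0 : (n:ℝ) = ∏ p ∈ n.primeFactors, (p:ℝ) ^ (n.factorization p) := by
    have := Nat.factorization_prod_pow_eq_self hn
    rw [Finsupp.prod, Nat.support_factorization] at this
    exact_mod_cast congrArg (Nat.cast : ℕ → ℝ) this.symm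
  have hrpow : (n:ℝ) ^ δ = ∏ p ∈ n.primeFactors, ((p:ℝ) ^ δ) ^ (n.factorization p) := by
    rw [h0, ← Real.finset_prod_rpow _ _ (fun p _ => by positivity) δ]
    refine Finset.prod_congr rfl fun p hp => ?_
    have hp0 : (0:ℝ) ≤ (p:ℝ) := Nat.cast_nonneg p
    rw [← Real.rpow_natCast (p:ℝ) (n.factorization p), ← Real.rpow_mul hp0,
      mul_comm, Real.rpow_mul hp0, Real.rpow_natCast]
  have hcard : ((n.divisors.card : ℕ) : ℝ) = ∏ p ∈ n.primeFactors, ((n.factorization p : ℝ) + 1) := by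
    rw [Nat.card_divisors hn]
    push_cast
    rfl
  have hpt : ∀ p ∈ n.primeFactors, ((n.factorization p : ℝ) + 1)
      ≤ w p * ((p:ℝ) ^ δ) ^ (n.factorization p) := by
    intro p hp
    have hp2 : 2 ≤ p := (Nat.prime_of_mem_primeFactors hp).two_le
    have hp2R : (2:ℝ) ≤ (p:ℝ) := by exact_mod_cast hp2
    by_cases hsmall : (p:ℝ) ^ δ < 2
    · rw [hw]; simp only [if_pos hsmall]
      calc ((n.factorization p : ℝ) + 1) ≤ M * ((2:ℝ) ^ δ) ^ (n.factorization p) := key1 _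
        _ ≤ M * ((p:ℝ) ^ δ) ^ (n.factorization p) := by
            apply mul_le_mul_of_nonneg_left _ (by linarith)
            exact pow_le_pow_left₀ (by positivity) (Real.rpow_le_rpow (by norm_num) hp2R hδ.le) _
    · rw [hw]; simp only [if_neg hsmall, one_mul]
      have ha : ((n.factorization p : ℝ) + 1) ≤ (2:ℝ) ^ (n.factorization p) := by
        have := @Nat.lt_two_pow_self (n.factorization p)
        exact_mod_cast Nat.succ_le_of_lt this
      calc ((n.factorization p : ℝ) + 1) ≤ (2:ℝ) ^ (n.factorization p) := ha
        _ ≤ ((p:ℝ) ^ δ) ^ (n.factorization p) :=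
            pow_le_pow_left₀ (by norm_num) (not_lt.1 hsmall) _
  have hprodw : ∏ p ∈ n.primeFactors, w p ≤ M ^ (T + 1) := by
    rw [← Finset.prod_filter_mul_prod_filter_not n.primeFactors (fun p : ℕ => (p:ℝ) ^ δ < 2) w]
    have e1 : ∏ p ∈ n.primeFactors.filter (fun p : ℕ => (p:ℝ) ^ δ < 2), w p
        = M ^ (n.primeFactors.filter (fun p : ℕ => (p:ℝ) ^ δ < 2)).card := by
      rw [Finset.prod_congr rfl (fun p hp => ?_), Finset.prod_const]
      rw [hw]; simp only [if_pos (Finset.mem_filter.1 hp).2]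
    have e2 : ∏ p ∈ n.primeFactors.filter (fun p : ℕ => ¬ ((p:ℝ) ^ δ < 2)), w p = 1 := by
      rw [Finset.prod_congr rfl (fun p hp => ?_), Finset.prod_const_one]
      rw [hw]; simp only [if_neg (Finset.mem_filter.1 hp).2]
    rw [e1, e2, mul_one]
    have hsub : n.primeFactors.filter (fun p : ℕ => (p:ℝ) ^ δ < 2) ⊆ Finset.range (T + 1) := by
      intro p hp
      obtain ⟨hpm, hps⟩ := Finset.mem_filter.1 hp
      have hp0 : (0:ℝ) ≤ (p:ℝ) := Nat.cast_nonneg p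
      have h1 : ((p:ℝ) ^ δ) ^ (1/δ) < (2:ℝ) ^ (1/δ) :=
        Real.rpow_lt_rpow (by positivity) hps (by positivity)
      have h2 : ((p:ℝ) ^ δ) ^ (1/δ) = (p:ℝ) := by
        rw [← Real.rpow_mul hp0]
        rw [show δ * (1/δ) = 1 by field_simp]
        exact Real.rpow_one _
      have h3 : (p:ℝ) < (T:ℝ) + 1 := by
        have h4 : (2:ℝ) ^ (1/δ) ≤ (T:ℝ) := Nat.le_ceil _
        rw [h2] at h1; linarith
      have : p < T + 1 := by exact_mod_cast h3
      exact Finset.mem_range.2 this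
    calc M ^ (n.primeFactors.filter (fun p : ℕ => (p:ℝ) ^ δ < 2)).card
        ≤ M ^ (Finset.range (T+1)).card :=
          pow_le_pow_right₀ hM1 (Finset.card_le_card hsub)
      _ = M ^ (T + 1) := by rw [Finset.card_range]
  calc ((n.divisors.card : ℕ) : ℝ) = ∏ p ∈ n.primeFactors, ((n.factorization p : ℝ) + 1) := hcard
    _ ≤ ∏ p ∈ n.primeFactors, (w p * ((p:ℝ) ^ δ) ^ (n.factorization p)) :=
        Finset.prod_le_prod (fun p _ => by positivity) hpt
    _ = (∏ p ∈ n.primeFactors, w p) * ∏ p ∈ n.primeFactors, ((p:ℝ) ^ δ) ^ (n.factorization p) :=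
        Finset.prod_mul_distrib
    _ ≤ M ^ (T + 1) * ∏ p ∈ n.primeFactors, ((p:ℝ) ^ δ) ^ (n.factorization p) := by
        apply mul_le_mul_of_nonneg_right hprodw
        apply Finset.prod_nonneg
        intro p _
        positivity
    _ = M ^ (T + 1) * (n:ℝ) ^ δ := by rw [← hrpow]

lemma main_bound (h H Q x : ℕ) (f g' : ℕ → ℂ) (F G D : ℝ)
    (hh : 0 < h) (hhH : h ≤ H) (hHQ : H < Q) (hHx : H < x)
    (hF0 : 0 ≤ F) (hG0 : 0 ≤ G) (hD0 : 0 ≤ D)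
    (hF : ∀ n ∈ Finset.Ioc x (x + h), ‖f n‖ ≤ F)
    (hG : ∀ q ∈ Finset.Icc 1 Q, ‖g' q‖ ≤ G)
    (hD : ∀ m : ℕ, 1 ≤ m → m ≤ x + h → ((m.divisors.card : ℕ) : ℝ) ≤ D) :
    ‖(∑ a ∈ Finset.Icc 1 H, ∑ n ∈ Finset.Ioc x (x + h),
        f n * ∑ q ∈ (Finset.Icc 1 Q).filter (fun q => q ∣ n - a), g' q)
      - ((∑ a ∈ Finset.Icc 1 H, ∑ q ∈ (Finset.Icc 1 Q).filter (fun q => q ∣ x - a), g' q) *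
            (∑ n ∈ Finset.Ioc x (x + h), f n)
          + ((H : ℂ) * ∑ q ∈ Finset.Icc 1 h, g' q / (q : ℂ)) *
            (∑ n ∈ Finset.Ioc x (x + h), f n)
          + (∑ a ∈ Finset.Icc 1 H, ∑ q ∈ Finset.Ioc h H,
              g' q * ∑ n ∈ (Finset.Ioc x (x + h)).filter (fun n => n % q = a % q), f n)
          - (∑ a ∈ Finset.Icc 1 H, ∑ q ∈ (Finset.Icc 1 H).filter (fun q => q ∣ x - a), g' q) *
            (∑ n ∈ Finset.Ioc x (x + h), f n))‖
      ≤ F * G * (2 + 2 * D) * (h : ℝ) ^ 2 := by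
  have hident : (∑ a ∈ Finset.Icc 1 H, ∑ n ∈ Finset.Ioc x (x + h),
        f n * ∑ q ∈ (Finset.Icc 1 Q).filter (fun q => q ∣ n - a), g' q)
      - ((∑ a ∈ Finset.Icc 1 H, ∑ q ∈ (Finset.Icc 1 Q).filter (fun q => q ∣ x - a), g' q) *
            (∑ n ∈ Finset.Ioc x (x + h), f n)
          + ((H : ℂ) * ∑ q ∈ Finset.Icc 1 h, g' q / (q : ℂ)) *
            (∑ n ∈ Finset.Ioc x (x + h), f n)
          + (∑ a ∈ Finset.Icc 1 H, ∑ q ∈ Finset.Ioc h H,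
              g' q * ∑ n ∈ (Finset.Ioc x (x + h)).filter (fun n => n % q = a % q), f n)
          - (∑ a ∈ Finset.Icc 1 H, ∑ q ∈ (Finset.Icc 1 H).filter (fun q => q ∣ x - a), g' q) *
            (∑ n ∈ Finset.Ioc x (x + h), f n))
      = ∑ n ∈ Finset.Ioc x (x + h), f n *
          ((∑ q ∈ Finset.Icc 1 h, ((cntAux H q n : ℂ) - (H : ℂ) / (q : ℂ)) * g' q)
            + ∑ q ∈ Finset.Ioc H Q, ((cntAux H q n : ℂ) - (cntAux H q x : ℂ)) * g' q) := by
    have eIcc : ∀ k : ℕ, Finset.Icc 1 k = Finset.Ioc 0 k := fun k => by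
      ext m; simp [Finset.mem_Icc, Finset.mem_Ioc]; omega
    have key : ∀ n : ℕ, (∑ q ∈ Finset.Icc 1 Q, (cntAux H q n : ℂ) * g' q)
        - ((∑ q ∈ Finset.Icc 1 Q, (cntAux H q x : ℂ) * g' q)
          + ((H : ℂ) * ∑ q ∈ Finset.Icc 1 h, g' q / (q : ℂ))
          + (∑ q ∈ Finset.Ioc h H, (cntAux H q n : ℂ) * g' q)
          - (∑ q ∈ Finset.Icc 1 H, (cntAux H q x : ℂ) * g' q))
        = (∑ q ∈ Finset.Icc 1 h, ((cntAux H q n : ℂ) - (H : ℂ) / (q : ℂ)) * g' q)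
          + ∑ q ∈ Finset.Ioc H Q, ((cntAux H q n : ℂ) - (cntAux H q x : ℂ)) * g' q := by
      intro n
      have split1 : ∀ w : ℕ → ℂ, ∑ q ∈ Finset.Icc 1 Q, w q
          = (∑ q ∈ Finset.Icc 1 h, w q + ∑ q ∈ Finset.Ioc h H, w q) + ∑ q ∈ Finset.Ioc H Q, w q := by
        intro w
        rw [eIcc, eIcc, Finset.sum_Ioc_consecutive w (Nat.zero_le h) hhH,
          Finset.sum_Ioc_consecutive w (Nat.zero_le H) hHQ.le]
      have split2 : ∀ w : ℕ → ℂ, ∑ q ∈ Finset.Icc 1 H, w q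
          = ∑ q ∈ Finset.Icc 1 h, w q + ∑ q ∈ Finset.Ioc h H, w q := by
        intro w
        rw [eIcc, eIcc, Finset.sum_Ioc_consecutive w (Nat.zero_le h) hhH]
      have ht2 : (H : ℂ) * ∑ q ∈ Finset.Icc 1 h, g' q / (q : ℂ)
          = ∑ q ∈ Finset.Icc 1 h, ((H : ℂ) / (q : ℂ)) * g' q := by
        rw [Finset.mul_sum]; exact Finset.sum_congr rfl fun q _ => by ring
      rw [split1 (fun q => (cntAux H q n : ℂ) * g' q), split1 (fun q => (cntAux H q x : ℂ) * g' q),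
        split2 (fun q => (cntAux H q x : ℂ) * g' q), ht2]
      simp only [sub_mul, Finset.sum_sub_distrib]
      ring
    rw [Finset.sum_comm]
    conv_lhs =>
      rw [swap_sum H g' (Finset.Icc 1 Q) x, swap_sum H g' (Finset.Icc 1 H) x,
        T3_swap h H x f g' hHx]
    have hm : ∀ c : ℂ, c * (∑ n ∈ Finset.Ioc x (x + h), f n)
        = ∑ n ∈ Finset.Ioc x (x + h), f n * c := fun c => by
      rw [Finset.mul_sum]; exact Finset.sum_congr rfl fun n _ => mul_comm _ _
    rw [hm, hm, hm]
    have hSS : ∀ n ∈ Finset.Ioc x (x + h), (∑ a ∈ Finset.Icc 1 H,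
        f n * ∑ q ∈ (Finset.Icc 1 Q).filter (fun q => q ∣ n - a), g' q)
        = f n * ∑ q ∈ Finset.Icc 1 Q, (cntAux H q n : ℂ) * g' q := fun n _ => by
      rw [← Finset.mul_sum, swap_sum]
    rw [Finset.sum_congr rfl hSS]
    rw [← Finset.sum_add_distrib, ← Finset.sum_add_distrib, ← Finset.sum_sub_distrib,
      ← Finset.sum_sub_distrib]
    refine Finset.sum_congr rfl fun n _ => ?_
    rw [← mul_add, ← mul_add, ← mul_sub, ← mul_sub, key n]
  rw [hident]
  set W : Finset ℕ := Finset.Icc (x - H) (x - H + (h - 1)) ∪ Finset.Icc x (x + (h - 1)) with hW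
  have hWcard : (W.card : ℝ) ≤ 2 * h := by
    have h1 : W.card ≤ 2 * h := by
      calc W.card ≤ (Finset.Icc (x - H) (x - H + (h - 1))).card
            + (Finset.Icc x (x + (h - 1))).card := Finset.card_union_le _ _
        _ ≤ 2 * h := by rw [Nat.card_Icc, Nat.card_Icc]; omega
    exact_mod_cast h1
  have hBnd : ∀ n ∈ Finset.Ioc x (x + h),
      ‖∑ q ∈ Finset.Ioc H Q, ((cntAux H q n : ℂ) - (cntAux H q x : ℂ)) * g' q‖
        ≤ (2 * h * D) * G := by
    intro n hn
    simp only [Finset.mem_Ioc] at hn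
    have step1 : ‖∑ q ∈ Finset.Ioc H Q, ((cntAux H q n : ℂ) - (cntAux H q x : ℂ)) * g' q‖
        ≤ ∑ q ∈ Finset.Ioc H Q, (if cntAux H q n = cntAux H q x then (0:ℝ) else G) := by
      refine (norm_sum_le _ _).trans (Finset.sum_le_sum fun q hq => ?_)
      simp only [Finset.mem_Ioc] at hq
      by_cases heq : cntAux H q n = cntAux H q x
      · rw [heq, if_pos rfl]; simp
      · rw [if_neg heq, norm_mul]
        have b1 : ‖((cntAux H q n : ℂ) - (cntAux H q x : ℂ))‖ ≤ 1 := by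
          have c1 : cntAux H q n ≤ 1 := cnt_le_one H q n hq.1 (by omega)
          have c2 : cntAux H q x ≤ 1 := cnt_le_one H q x hq.1 hHx
          have e1 : ((cntAux H q n : ℂ) - (cntAux H q x : ℂ))
              = (((cntAux H q n : ℝ) - (cntAux H q x : ℝ) : ℝ) : ℂ) := by push_cast; ring
          rw [e1, Complex.norm_real, Real.norm_eq_abs, abs_le]
          have d1 : (cntAux H q n : ℝ) ≤ 1 := by exact_mod_cast c1
          have d2 : (cntAux H q x : ℝ) ≤ 1 := by exact_mod_cast c2
          have d3 : (0:ℝ) ≤ (cntAux H q n : ℝ) := Nat.cast_nonneg _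
          have d4 : (0:ℝ) ≤ (cntAux H q x : ℝ) := Nat.cast_nonneg _
          constructor <;> linarith
        calc ‖((cntAux H q n : ℂ) - (cntAux H q x : ℂ))‖ * ‖g' q‖
            ≤ 1 * G := mul_le_mul b1 (hG q (Finset.mem_Icc.2 ⟨by omega, hq.2⟩)) (norm_nonneg _)
              (by norm_num)
          _ = G := one_mul G
    have step2 : ∑ q ∈ Finset.Ioc H Q, (if cntAux H q n = cntAux H q x then (0:ℝ) else G)
        = ((((Finset.Ioc H Q).filter (fun q => ¬ (cntAux H q n = cntAux H q x))).card : ℕ) : ℝ) * G := by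
      rw [Finset.sum_ite, Finset.sum_const_zero, zero_add, Finset.sum_const, nsmul_eq_mul]
    have step3 : ((Finset.Ioc H Q).filter (fun q => ¬ (cntAux H q n = cntAux H q x))).card
        ≤ ∑ m ∈ W, m.divisors.card := by
      have hsub : (Finset.Ioc H Q).filter (fun q => ¬ (cntAux H q n = cntAux H q x))
          ⊆ W.biUnion Nat.divisors := by
        intro q hq
        obtain ⟨hq1, hne⟩ := Finset.mem_filter.1 hq
        simp only [Finset.mem_Ioc] at hq1
        obtain ⟨m, hmW, hdvd⟩ := exists_dvd_of_cnt_ne h H q x n hh hhH hHx hn.1 hn.2 hq1.1 hne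
        refine Finset.mem_biUnion.2 ⟨m, hmW, Nat.mem_divisors.2 ⟨hdvd, ?_⟩⟩
        simp only [hW, Finset.mem_union, Finset.mem_Icc] at hmW
        omega
      exact (Finset.card_le_card hsub).trans Finset.card_biUnion_le
    have step4 : ((∑ m ∈ W, m.divisors.card : ℕ) : ℝ) ≤ 2 * h * D := by
      push_cast
      calc ∑ m ∈ W, ((m.divisors.card : ℕ) : ℝ) ≤ ∑ m ∈ W, D := by
            refine Finset.sum_le_sum fun m hm => ?_
            simp only [hW, Finset.mem_union, Finset.mem_Icc] at hm
            exact hD m (by omega) (by omega)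
        _ = (W.card : ℝ) * D := by rw [Finset.sum_const, nsmul_eq_mul]
        _ ≤ 2 * h * D := mul_le_mul_of_nonneg_right hWcard hD0
    calc ‖∑ q ∈ Finset.Ioc H Q, ((cntAux H q n : ℂ) - (cntAux H q x : ℂ)) * g' q‖
        ≤ ((((Finset.Ioc H Q).filter (fun q => ¬ (cntAux H q n = cntAux H q x))).card : ℕ) : ℝ) * G := by
          rw [← step2]; exact step1
      _ ≤ (2 * h * D) * G := by
          apply mul_le_mul_of_nonneg_right _ hG0
          calc ((((Finset.Ioc H Q).filter (fun q => ¬ (cntAux H q n = cntAux H q x))).card : ℕ) : ℝ)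
              ≤ ((∑ m ∈ W, m.divisors.card : ℕ) : ℝ) := by exact_mod_cast step3
            _ ≤ 2 * h * D := step4
  have hAnd : ∀ n ∈ Finset.Ioc x (x + h),
      ‖∑ q ∈ Finset.Icc 1 h, ((cntAux H q n : ℂ) - (H : ℂ) / (q : ℂ)) * g' q‖
        ≤ (h : ℝ) * (2 * G) := by
    intro n hn
    simp only [Finset.mem_Ioc] at hn
    have hb : ∀ q ∈ Finset.Icc 1 h, ‖((cntAux H q n : ℂ) - (H : ℂ) / (q : ℂ)) * g' q‖ ≤ 2 * G := by
      intro q hq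
      simp only [Finset.mem_Icc] at hq
      rw [norm_mul]
      have b1 : ‖((cntAux H q n : ℂ) - (H : ℂ) / (q : ℂ))‖ ≤ 2 := by
        have e1 : ((cntAux H q n : ℂ) - (H : ℂ) / (q : ℂ))
            = (((cntAux H q n : ℝ) - (H : ℝ) / (q : ℝ) : ℝ) : ℂ) := by push_cast; ring
        rw [e1, Complex.norm_real, Real.norm_eq_abs]
        exact cnt_near H q n (by omega) (by omega)
      exact mul_le_mul b1 (hG q (Finset.mem_Icc.2 ⟨hq.1, by omega⟩)) (norm_nonneg _) (by norm_num)
    calc ‖∑ q ∈ Finset.Icc 1 h, ((cntAux H q n : ℂ) - (H : ℂ) / (q : ℂ)) * g' q‖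
        ≤ ∑ q ∈ Finset.Icc 1 h, ‖((cntAux H q n : ℂ) - (H : ℂ) / (q : ℂ)) * g' q‖ :=
          norm_sum_le _ _
      _ ≤ ∑ q ∈ Finset.Icc 1 h, (2 * G) := Finset.sum_le_sum hb
      _ = (h : ℝ) * (2 * G) := by
          rw [Finset.sum_const, nsmul_eq_mul, Nat.card_Icc]
          norm_num
  calc ‖∑ n ∈ Finset.Ioc x (x + h), f n *
          ((∑ q ∈ Finset.Icc 1 h, ((cntAux H q n : ℂ) - (H : ℂ) / (q : ℂ)) * g' q)
            + ∑ q ∈ Finset.Ioc H Q, ((cntAux H q n : ℂ) - (cntAux H q x : ℂ)) * g' q)‖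
      ≤ ∑ n ∈ Finset.Ioc x (x + h), F * ((h : ℝ) * (2 * G) + (2 * h * D) * G) := by
        refine (norm_sum_le _ _).trans (Finset.sum_le_sum fun n hn => ?_)
        rw [norm_mul]
        refine mul_le_mul (hF n hn) ?_ (norm_nonneg _) hF0
        refine (norm_add_le _ _).trans (add_le_add (hAnd n hn) (hBnd n hn))
    _ = (h : ℝ) * (F * ((h : ℝ) * (2 * G) + (2 * h * D) * G)) := by
        rw [Finset.sum_const, nsmul_eq_mul, Nat.card_Ioc]
        norm_num
    _ = F * G * (2 + 2 * D) * (h : ℝ) ^ 2 := by ring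

/-- `f` is essentially bounded: for every `ε > 0`, `f n ≪_ε n^ε`. -/
def EssBdd (f : ℕ → ℂ) : Prop :=
  ∀ ε : ℝ, 0 < ε → ∃ C : ℝ, ∀ n : ℕ, 1 ≤ n → ‖f n‖ ≤ C * (n : ℝ) ^ ε

/-- Theorem 2: companion formula for averages of short correlations of an
essentially bounded `f` with a sieve function `g` of range `Q`, having
Eratosthenes transform `g'`, i.e. `g n = ∑_{q ∣ n, q ≤ Q} g' q`. -/
theorem avg_short_correlations_thm2
    (h H Q x : ℕ → ℕ) (hh : ∀ i, 0 < h i) (hx : ∀ i, 0 < x i)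
    (hhH : ∀ i, h i ≤ H i) (hHQ : ∀ i, H i < Q i)
    (hQx : (fun i => (Q i : ℝ)) =O[atTop] (fun i => (x i : ℝ)))
    (hHx : (fun i => (H i : ℝ)) =o[atTop] (fun i => (x i : ℝ)))
    (f g' : ℕ → ℂ) (hf : EssBdd f) (hg' : EssBdd g')
    (g : ℕ → ℕ → ℂ)
    (hg : ∀ i n, g i n = ∑ q ∈ (Finset.Icc 1 (Q i)).filter (fun q => q ∣ n), g' q)
    (ε : ℝ) (hε : 0 < ε) :
    (fun i =>
        (∑ a ∈ Finset.Icc 1 (H i), ∑ n ∈ Finset.Ioc (x i) (x i + h i), f n * g i (n - a))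
          - ((∑ a ∈ Finset.Icc 1 (H i), g i (x i - a)) *
                (∑ n ∈ Finset.Ioc (x i) (x i + h i), f n)
              + ((H i : ℂ) * ∑ q ∈ Finset.Icc 1 (h i), g' q / (q : ℂ)) *
                (∑ n ∈ Finset.Ioc (x i) (x i + h i), f n)
              + (∑ a ∈ Finset.Icc 1 (H i), ∑ q ∈ Finset.Ioc (h i) (H i),
                  g' q * ∑ n ∈ (Finset.Ioc (x i) (x i + h i)).filter
                    (fun n => n % q = a % q), f n)
              - (∑ a ∈ Finset.Icc 1 (H i),
                  ∑ q ∈ (Finset.Icc 1 (H i)).filter (fun q => q ∣ x i - a), g' q) *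
                (∑ n ∈ Finset.Ioc (x i) (x i + h i), f n)))
      =O[atTop] (fun i => (x i : ℝ) ^ ε * (h i : ℝ) ^ 2) := by
  set δ : ℝ := ε / 3 with hδdef
  have hδ : 0 < δ := by positivity
  obtain ⟨Cf, hCf⟩ := hf δ hδ
  obtain ⟨Cg, hCg⟩ := hg' δ hδ
  obtain ⟨Cd, hCd1, hCd⟩ := divisor_bound δ hδ
  have hCf0 : 0 ≤ Cf := by
    have := hCf 1 le_rfl
    simp only [Nat.cast_one, Real.one_rpow, mul_one] at this
    exact le_trans (norm_nonneg _) this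
  have hCg0 : 0 ≤ Cg := by
    have := hCg 1 le_rfl
    simp only [Nat.cast_one, Real.one_rpow, mul_one] at this
    exact le_trans (norm_nonneg _) this
  obtain ⟨R₀, hR₀pos, hR₀⟩ := hQx.exists_pos
  set R : ℝ := max R₀ 1 with hRdef
  have hR1 : (1:ℝ) ≤ R := le_max_right _ _
  have hR0 : (0:ℝ) < R := lt_of_lt_of_le one_pos hR1
  have hQev : ∀ᶠ i in atTop, (Q i : ℝ) ≤ R * (x i : ℝ) := by
    filter_upwards [hR₀.bound] with i hi
    rw [Real.norm_of_nonneg (Nat.cast_nonneg _), Real.norm_of_nonneg (Nat.cast_nonneg _)] at hi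
    calc (Q i : ℝ) ≤ R₀ * (x i : ℝ) := hi
      _ ≤ R * (x i : ℝ) := mul_le_mul_of_nonneg_right (le_max_left _ _) (Nat.cast_nonneg _)
  have hHev : ∀ᶠ i in atTop, H i < x i := by
    filter_upwards [hHx.def one_half_pos] with i hi
    rw [Real.norm_of_nonneg (Nat.cast_nonneg _), Real.norm_of_nonneg (Nat.cast_nonneg _)] at hi
    have hx1 : (1:ℝ) ≤ (x i : ℝ) := by exact_mod_cast hx i
    have : (H i : ℝ) < (x i : ℝ) := by linarith
    exact_mod_cast this
  rw [isBigO_iff]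
  refine ⟨Cf * Cg * (2 + 2 * Cd) * ((2:ℝ) ^ δ * (2:ℝ) ^ δ * R ^ δ), ?_⟩
  filter_upwards [hQev, hHev] with i hQi hHi
  have hx0 : (0:ℝ) < (x i : ℝ) := by exact_mod_cast hx i
  have hx1 : (1:ℝ) ≤ (x i : ℝ) := by exact_mod_cast hx i
  have hhx : h i ≤ x i := le_of_lt (lt_of_le_of_lt (hhH i) hHi)
  have hP1 : (1:ℝ) ≤ (x i : ℝ) ^ δ := by
    rw [show (1:ℝ) = (1:ℝ) ^ δ from (Real.one_rpow δ).symm]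
    exact Real.rpow_le_rpow (by norm_num) hx1 hδ.le
  have h21 : (1:ℝ) ≤ (2:ℝ) ^ δ := by
    rw [show (1:ℝ) = (1:ℝ) ^ δ from (Real.one_rpow δ).symm]
    exact Real.rpow_le_rpow (by norm_num) (by norm_num) hδ.le
  have hR1δ : (1:ℝ) ≤ R ^ δ := by
    rw [show (1:ℝ) = (1:ℝ) ^ δ from (Real.one_rpow δ).symm]
    exact Real.rpow_le_rpow (by norm_num) hR1 hδ.le
  simp only [hg]
  have main := main_bound (h i) (H i) (Q i) (x i) f g'
      (Cf * (2 * (x i : ℝ)) ^ δ) (Cg * (R * (x i : ℝ)) ^ δ) (Cd * (2 * (x i : ℝ)) ^ δ)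
      (hh i) (hhH i) (hHQ i) hHi
      (by positivity) (by positivity) (by positivity)
      (fun n hn => by
        simp only [Finset.mem_Ioc] at hn
        calc ‖f n‖ ≤ Cf * (n : ℝ) ^ δ := hCf n (by omega)
          _ ≤ Cf * (2 * (x i : ℝ)) ^ δ := by
              apply mul_le_mul_of_nonneg_left _ hCf0
              apply Real.rpow_le_rpow (Nat.cast_nonneg _) _ hδ.le
              have : (n : ℝ) ≤ (x i : ℝ) + (x i : ℝ) := by
                have h1 : n ≤ x i + x i := by omega
                exact_mod_cast h1
              linarith)
      (fun q hq => by
        simp only [Finset.mem_Icc] at hq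
        calc ‖g' q‖ ≤ Cg * (q : ℝ) ^ δ := hCg q hq.1
          _ ≤ Cg * (R * (x i : ℝ)) ^ δ := by
              apply mul_le_mul_of_nonneg_left _ hCg0
              apply Real.rpow_le_rpow (Nat.cast_nonneg _) _ hδ.le
              calc (q : ℝ) ≤ (Q i : ℝ) := by exact_mod_cast hq.2
                _ ≤ R * (x i : ℝ) := hQi)
      (fun m hm1 hm2 => by
        calc ((m.divisors.card : ℕ) : ℝ) ≤ Cd * (m : ℝ) ^ δ := hCd m (by omega)
          _ ≤ Cd * (2 * (x i : ℝ)) ^ δ := by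
              apply mul_le_mul_of_nonneg_left _ (by linarith : (0:ℝ) ≤ Cd)
              apply Real.rpow_le_rpow (Nat.cast_nonneg _) _ hδ.le
              have h1 : m ≤ x i + x i := by omega
              have : (m : ℝ) ≤ (x i : ℝ) + (x i : ℝ) := by exact_mod_cast h1
              linarith)
  refine main.trans ?_
  rw [Real.norm_of_nonneg (by positivity)]
  have h2x : (2 * (x i : ℝ)) ^ δ = (2:ℝ) ^ δ * (x i : ℝ) ^ δ :=
    Real.mul_rpow (by norm_num) (Nat.cast_nonneg _)
  have hRx : (R * (x i : ℝ)) ^ δ = R ^ δ * (x i : ℝ) ^ δ :=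
    Real.mul_rpow hR0.le (Nat.cast_nonneg _)
  have hPPP : (x i : ℝ) ^ δ * (x i : ℝ) ^ δ * (x i : ℝ) ^ δ = (x i : ℝ) ^ ε := by
    rw [← Real.rpow_add hx0, ← Real.rpow_add hx0]
    congr 1
    rw [hδdef]; ring
  set P : ℝ := (x i : ℝ) ^ δ
  have hA : (2:ℝ) + 2 * (Cd * ((2:ℝ) ^ δ * P)) ≤ (2 + 2 * Cd) * ((2:ℝ) ^ δ * P) := by
    have h1 : (1:ℝ) ≤ (2:ℝ) ^ δ * P := by nlinarith
    nlinarith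
  have hfact : Cf * (2 * (x i : ℝ)) ^ δ * (Cg * (R * (x i : ℝ)) ^ δ) * (2 + 2 * (Cd * (2 * (x i : ℝ)) ^ δ))
      ≤ Cf * Cg * (2 + 2 * Cd) * ((2:ℝ) ^ δ * (2:ℝ) ^ δ * R ^ δ) * (x i : ℝ) ^ ε :=
    calc Cf * (2 * (x i : ℝ)) ^ δ * (Cg * (R * (x i : ℝ)) ^ δ) * (2 + 2 * (Cd * (2 * (x i : ℝ)) ^ δ))
        = (Cf * Cg * ((2:ℝ) ^ δ * R ^ δ) * (P * P)) * ((2:ℝ) + 2 * (Cd * ((2:ℝ) ^ δ * P))) := by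
          rw [h2x, hRx]; ring
      _ ≤ (Cf * Cg * ((2:ℝ) ^ δ * R ^ δ) * (P * P)) * ((2 + 2 * Cd) * ((2:ℝ) ^ δ * P)) := by
          apply mul_le_mul_of_nonneg_left hA (by positivity)
      _ = Cf * Cg * (2 + 2 * Cd) * ((2:ℝ) ^ δ * (2:ℝ) ^ δ * R ^ δ) * (P * P * P) := by ring
      _ = Cf * Cg * (2 + 2 * Cd) * ((2:ℝ) ^ δ * (2:ℝ) ^ δ * R ^ δ) * (x i : ℝ) ^ ε := by
          rw [hPPP]
  calc Cf * (2 * (x i : ℝ)) ^ δ * (Cg * (R * (x i : ℝ)) ^ δ) * (2 + 2 * (Cd * (2 * (x i : ℝ)) ^ δ)) * (h i : ℝ) ^ 2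
      ≤ (Cf * Cg * (2 + 2 * Cd) * ((2:ℝ) ^ δ * (2:ℝ) ^ δ * R ^ δ) * (x i : ℝ) ^ ε) * (h i : ℝ) ^ 2 :=
        mul_le_mul_of_nonneg_right hfact (by positivity)
    _ = Cf * Cg * (2 + 2 * Cd) * ((2:ℝ) ^ δ * (2:ℝ) ^ δ * R ^ δ) * ((x i : ℝ) ^ ε * (h i : ℝ) ^ 2) := by
        ring
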